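/- arXiv:1401.2256 — 4 statements merged into one kernel-verified Lean document; each statement's English description precedes it below -/
import Mathlib

section
/- Let $T_1$ be a nonnegative real random variable (possibly taking value $+\infty$) and define $\varphi(\lambda) := \mathbb{E}(e^{\lambda T_1}\,\mathbf{1}(T_1 < \infty))$ for $\lambda < 0$. If $\mathbb{P}(T_1 < \infty) > 0$ and $\alpha \geq 0$ is the minimum of the support of the law of $T_1$ restricted to $\{T_1 < \infty\}$, then $\lim_{\lambda \to -\infty} \frac{\varphi'(\lambda)}{\varphi(\lambda)} = \alpha$, i.e. the logarithmic derivative of $\varphi$ tends to $\alpha$ as $\lambda \to -\infty$. -/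
open MeasureTheory Filter Topology

private lemma aux_z_exp (z : ℝ) : z * Real.exp (-z) ≤ 1 := by
  rw [← Real.exp_zero, Real.exp_zero]
  have h : z ≤ Real.exp z := (le_add_of_nonneg_right zero_le_one).trans (Real.add_one_le_exp z)
  have hpos := Real.exp_pos z
  calc z * Real.exp (-z) ≤ Real.exp z * Real.exp (-z) := by
        exact mul_le_mul_of_nonneg_right h (Real.exp_pos _).le
    _ = 1 := by rw [← Real.exp_add]; simp

/-- For `y ≥ 0` and `l < 0`, `y * exp (l*y) ≤ 1/(-l)`. -/
private lemma aux_y_exp {y l : ℝ} (hy : 0 ≤ y) (hl : l < 0) :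
    y * Real.exp (l * y) ≤ 1 / (-l) := by
  have h := aux_z_exp (-l * y)
  have hl' : 0 < -l := by linarith
  have e : l * y = -(-l * y) := by ring
  rw [e, le_div_iff₀ hl']
  nlinarith [h]

/-- Pointwise key bound: for `x ≥ α ≥ 0`, `l < 0`, `ε > 0`,
`(x - α) * exp (l*x) ≤ (ε/2) * exp (l*x) + (2/(-l)) * exp (l*(α+ε/4))`. -/
private lemma aux_key {x α l ε : ℝ} (hα0 : 0 ≤ α) (hx : α ≤ x) (hl : l < 0) (hε : 0 < ε) :
    (x - α) * Real.exp (l * x) ≤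
      ε / 2 * Real.exp (l * x) + 2 / (-l) * Real.exp (l * (α + ε / 4)) := by
  have hl' : 0 < -l := by linarith
  rcases le_or_gt x (α + ε / 2) with hcase | hcase
  · have h1 : (x - α) * Real.exp (l * x) ≤ ε / 2 * Real.exp (l * x) :=
      mul_le_mul_of_nonneg_right (by linarith) (Real.exp_pos _).le
    have h2 : 0 ≤ 2 / (-l) * Real.exp (l * (α + ε / 4)) :=
      mul_nonneg (by positivity) (Real.exp_pos _).le
    linarith
  · have h0 : 0 ≤ ε / 2 * Real.exp (l * x) := mul_nonneg (by positivity) (Real.exp_pos _).le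
    have hy : 0 ≤ x - α := by linarith
    -- (x-α) * exp(l*x) = exp(l*α) * ((x-α) * exp(l/2*(x-α))) * exp(l/2*(x-α))
    have e1 : l * x = l * α + l / 2 * (x - α) + l / 2 * (x - α) := by ring
    have hA : (x - α) * Real.exp (l / 2 * (x - α)) ≤ 2 / (-l) := by
      have := aux_y_exp hy (by linarith : l / 2 < 0)
      have : (x - α) * Real.exp (l / 2 * (x - α)) ≤ 1 / (-(l / 2)) := this
      calc (x - α) * Real.exp (l / 2 * (x - α)) ≤ 1 / (-(l / 2)) := this
        _ = 2 / (-l) := by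
            have hlne : l ≠ 0 := hl.ne
            field_simp
    have hB : Real.exp (l / 2 * (x - α)) ≤ Real.exp (l * (ε / 4)) := by
      apply Real.exp_le_exp.2
      nlinarith
    have hexpα : Real.exp (l * α) ≤ 1 := by
      rw [← Real.exp_zero]
      exact Real.exp_le_exp.2 (by nlinarith)
    have main : (x - α) * Real.exp (l * x) ≤ 2 / (-l) * Real.exp (l * (α + ε / 4)) := by
      rw [e1, Real.exp_add, Real.exp_add]
      have e2 : l * (α + ε / 4) = l * α + l * (ε / 4) := by ring
      rw [e2, Real.exp_add]
      have hp1 : (0:ℝ) < Real.exp (l * α) := Real.exp_pos _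
      have hp2 : (0:ℝ) < Real.exp (l / 2 * (x - α)) := Real.exp_pos _
      have hp3 : (0:ℝ) < Real.exp (l * (ε / 4)) := Real.exp_pos _
      calc (x - α) * (Real.exp (l * α) * Real.exp (l / 2 * (x - α)) * Real.exp (l / 2 * (x - α)))
          = Real.exp (l * α) * ((x - α) * Real.exp (l / 2 * (x - α))) *
              Real.exp (l / 2 * (x - α)) := by ring
        _ ≤ Real.exp (l * α) * (2 / (-l)) * Real.exp (l * (ε / 4)) := by
            apply mul_le_mul
            · exact mul_le_mul_of_nonneg_left hA hp1.le
            · exact hB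
            · exact hp2.le
            · positivity
        _ = 2 / (-l) * (Real.exp (l * α) * Real.exp (l * (ε / 4))) := by ring
    linarith

/-- The logarithmic derivative of the (restricted) moment generating function of a
nonnegative (possibly infinite) random variable tends, as `λ → -∞`, to the minimum `α`
of the support of its law restricted to the event where it is finite. -/
theorem logDeriv_mgf_tendsto_support_min
    {Ω : Type*} [MeasurableSpace Ω] (ℙ : Measure Ω) [IsProbabilityMeasure ℙ]
    (T : Ω → ENNReal) (hT : Measurable T)
    (hfin : ℙ {ω | T ω ≠ ⊤} ≠ 0)
    (α : ℝ) (hα0 : 0 ≤ α)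
    (hα : α = sInf {t : ℝ | 0 ≤ t ∧ ℙ {ω | T ω ≠ ⊤ ∧ (T ω).toReal ≤ t} ≠ 0})
    (φ φ' : ℝ → ℝ)
    (hφ : ∀ l : ℝ, l < 0 →
      φ l = ∫ ω in {ω | T ω ≠ ⊤}, Real.exp (l * (T ω).toReal) ∂ℙ)
    (hφ' : ∀ l : ℝ, l < 0 →
      φ' l = ∫ ω in {ω | T ω ≠ ⊤}, (T ω).toReal * Real.exp (l * (T ω).toReal) ∂ℙ) :
    Tendsto (fun l : ℝ => φ' l / φ l) atBot (𝓝 α) := by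
  set S : Set Ω := {ω | T ω ≠ ⊤} with hS_def
  have hS : MeasurableSet S := (hT (measurableSet_singleton ⊤)).compl
  set X : Ω → ℝ := fun ω => (T ω).toReal with hX_def
  have hXm : Measurable X := hT.ennreal_toReal
  have hX0 : ∀ ω, 0 ≤ X ω := fun ω => ENNReal.toReal_nonneg
  set μ : Measure Ω := ℙ.restrict S with hμ_def
  have hset : ∀ t : ℝ, μ {ω | X ω ≤ t} = ℙ {ω | T ω ≠ ⊤ ∧ X ω ≤ t} := by
    intro t
    rw [hμ_def, Measure.restrict_apply (measurableSet_le hXm measurable_const)]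
    congr 1
    ext ω
    simp only [Set.mem_inter_iff, Set.mem_setOf_eq, hS_def]
    tauto
  -- nonemptiness of the defining set of α
  have hQ : Set.Nonempty {t : ℝ | 0 ≤ t ∧ ℙ {ω | T ω ≠ ⊤ ∧ (T ω).toReal ≤ t} ≠ 0} := by
    by_contra h
    rw [Set.not_nonempty_iff_eq_empty, Set.eq_empty_iff_forall_notMem] at h
    apply hfin
    have hcover : S ⊆ ⋃ n : ℕ, {ω | T ω ≠ ⊤ ∧ (T ω).toReal ≤ (n : ℝ)} := by
      intro ω hω
      obtain ⟨n, hn⟩ := exists_nat_ge ((T ω).toReal)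
      exact Set.mem_iUnion.2 ⟨n, hω, hn⟩
    refine measure_mono_null hcover (measure_iUnion_null fun n => ?_)
    have := h (n : ℝ)
    simp only [Set.mem_setOf_eq, not_and, not_ne_iff] at this
    exact this (Nat.cast_nonneg n)
  have hbdd : BddBelow {t : ℝ | 0 ≤ t ∧ ℙ {ω | T ω ≠ ⊤ ∧ (T ω).toReal ≤ t} ≠ 0} :=
    ⟨0, fun s hs => hs.1⟩
  have hzero : ∀ t : ℝ, t < α → ℙ {ω | T ω ≠ ⊤ ∧ (T ω).toReal ≤ t} = 0 := by
    intro t ht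
    rcases lt_or_ge t 0 with h | h
    · have he : {ω | T ω ≠ ⊤ ∧ (T ω).toReal ≤ t} = (∅ : Set Ω) := by
        rw [Set.eq_empty_iff_forall_notMem]
        rintro ω ⟨-, h2⟩
        have := hX0 ω
        simp only [hX_def] at this
        linarith
      rw [he, measure_empty]
    · by_contra hne
      have hmem : t ∈ {t : ℝ | 0 ≤ t ∧ ℙ {ω | T ω ≠ ⊤ ∧ (T ω).toReal ≤ t} ≠ 0} := ⟨h, hne⟩
      have := csInf_le hbdd hmem
      rw [← hα] at this
      linarith
  have hpos : ∀ t : ℝ, α < t → ℙ {ω | T ω ≠ ⊤ ∧ (T ω).toReal ≤ t} ≠ 0 := by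
    intro t ht
    obtain ⟨s, hs, hst⟩ := exists_lt_of_csInf_lt hQ (by rw [← hα]; exact ht)
    intro h0
    refine hs.2 (measure_mono_null ?_ h0)
    intro ω hω
    exact ⟨hω.1, hω.2.trans hst.le⟩
  -- a.e. lower bound
  have hae : ∀ᵐ ω ∂μ, α ≤ X ω := by
    rw [ae_iff]
    have hmeq : {ω | ¬ α ≤ X ω} = {ω | X ω < α} := by ext ω; simp
    rw [hmeq, hμ_def, Measure.restrict_apply (measurableSet_lt hXm measurable_const)]
    have hcov : {ω | X ω < α} ∩ S ⊆
        ⋃ n : ℕ, {ω | T ω ≠ ⊤ ∧ (T ω).toReal ≤ α - 1 / (n + 1)} := by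
      rintro ω ⟨h1, h2⟩
      have h1' : X ω < α := h1
      obtain ⟨n, hn⟩ := exists_nat_one_div_lt (show (0:ℝ) < α - X ω by linarith)
      refine Set.mem_iUnion.2 ⟨n, h2, ?_⟩
      have : (1 : ℝ) / (n + 1) < α - X ω := hn
      simp only [hX_def] at this ⊢
      linarith
    refine measure_mono_null hcov (measure_iUnion_null fun n => hzero _ ?_)
    have : (0:ℝ) < 1 / ((n:ℝ) + 1) := by positivity
    linarith
  -- integrability
  have hmeas_e : ∀ l : ℝ, Measurable fun ω => Real.exp (l * X ω) :=
    fun l => (hXm.const_mul l).exp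
  have hfi : ∀ l : ℝ, l < 0 → Integrable (fun ω => Real.exp (l * X ω)) μ := by
    intro l hl
    refine Integrable.mono' (integrable_const 1) (hmeas_e l).aestronglyMeasurable
      (Filter.Eventually.of_forall fun ω => ?_)
    rw [Real.norm_eq_abs, abs_of_pos (Real.exp_pos _), ← Real.exp_zero]
    exact Real.exp_le_exp.2 (mul_nonpos_of_nonpos_of_nonneg hl.le (hX0 ω))
  have hgi : ∀ l : ℝ, l < 0 → Integrable (fun ω => X ω * Real.exp (l * X ω)) μ := by
    intro l hl
    refine Integrable.mono' (integrable_const (1 / (-l)))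
      (hXm.mul (hmeas_e l)).aestronglyMeasurable
      (Filter.Eventually.of_forall fun ω => ?_)
    rw [Real.norm_eq_abs, abs_of_nonneg (mul_nonneg (hX0 ω) (Real.exp_pos _).le)]
    exact aux_y_exp (hX0 ω) hl
  -- main estimate
  rw [Metric.tendsto_nhds]
  intro ε hε
  have hc0 := hpos (α + ε / 4) (by linarith)
  set c := (ℙ {ω | T ω ≠ ⊤ ∧ (T ω).toReal ≤ α + ε / 4}).toReal with hc_def
  have hcpos : 0 < c := ENNReal.toReal_pos hc0 (measure_ne_top ℙ _)
  set A := (ℙ S).toReal with hA_def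
  have hApos : 0 < A := ENNReal.toReal_pos hfin (measure_ne_top ℙ _)
  filter_upwards [eventually_le_atBot (-1 - 4 * A / (c * ε))] with l hl
  have hcε : 0 < c * ε := mul_pos hcpos hε
  have hdiv : 0 < 4 * A / (c * ε) := by positivity
  have hl0 : l < 0 := by linarith
  have hln : 4 * A / (c * ε) < -l := by linarith
  have hm : 0 < -l := by linarith
  rw [hφ l hl0, hφ' l hl0, Real.dist_eq]
  set D := ∫ ω in S, Real.exp (l * X ω) ∂ℙ with hD_def
  set N := ∫ ω in S, X ω * Real.exp (l * X ω) ∂ℙ with hN_def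
  set E := Real.exp (l * (α + ε / 4)) with hE_def
  have hEpos : 0 < E := Real.exp_pos _
  -- lower bound on D
  have hD_lb : c * E ≤ D := by
    have hEm : MeasurableSet {ω | X ω ≤ α + ε / 4} := measurableSet_le hXm measurable_const
    have h1 : E * (μ {ω | X ω ≤ α + ε / 4}).toReal ≤
        ∫ ω in {ω | X ω ≤ α + ε / 4}, Real.exp (l * X ω) ∂μ := by
      refine setIntegral_ge_of_const_le_real hEm (measure_ne_top μ _) (fun ω hω => ?_)
        ((hfi l hl0).integrableOn)
      exact Real.exp_le_exp.2 (mul_le_mul_of_nonpos_left hω hl0.le)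
    have h2 : ∫ ω in {ω | X ω ≤ α + ε / 4}, Real.exp (l * X ω) ∂μ ≤
        ∫ ω, Real.exp (l * X ω) ∂μ :=
      setIntegral_le_integral (hfi l hl0)
        (Filter.Eventually.of_forall fun ω => (Real.exp_pos _).le)
    have h3 : (μ {ω | X ω ≤ α + ε / 4}).toReal = c := by rw [hset, hc_def]
    rw [h3] at h1
    calc c * E = E * c := mul_comm _ _
      _ ≤ ∫ ω, Real.exp (l * X ω) ∂μ := h1.trans h2
      _ = D := rfl
  have hD_pos : 0 < D := lt_of_lt_of_le (by positivity) hD_lb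
  -- N - α * D as an integral
  have hsub : N - α * D = ∫ ω, (X ω - α) * Real.exp (l * X ω) ∂μ := by
    have heq : (fun ω => (X ω - α) * Real.exp (l * X ω)) =
        fun ω => X ω * Real.exp (l * X ω) - α * Real.exp (l * X ω) := by
      funext ω; ring
    rw [heq, integral_sub (hgi l hl0) ((hfi l hl0).const_mul α), integral_const_mul]
  have hnn : 0 ≤ N - α * D := by
    rw [hsub]
    refine integral_nonneg_of_ae (hae.mono fun ω h => ?_)
    exact mul_nonneg (by linarith) (Real.exp_pos _).le
  -- upper bound
  have hub : N - α * D ≤ ε / 2 * D + 2 / (-l) * E * A := by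
    rw [hsub]
    have hbnd : ∀ᵐ ω ∂μ, (X ω - α) * Real.exp (l * X ω) ≤
        ε / 2 * Real.exp (l * X ω) + 2 / (-l) * E := by
      refine hae.mono fun ω h => ?_
      simpa [hE_def] using aux_key hα0 h hl0 hε
    have hint1 : Integrable (fun ω => (X ω - α) * Real.exp (l * X ω)) μ := by
      have heq : (fun ω => (X ω - α) * Real.exp (l * X ω)) =
          fun ω => X ω * Real.exp (l * X ω) - α * Real.exp (l * X ω) := by
        funext ω; ring
      rw [heq]
      exact (hgi l hl0).sub ((hfi l hl0).const_mul α)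
    have hint2 : Integrable (fun ω => ε / 2 * Real.exp (l * X ω) + 2 / (-l) * E) μ :=
      ((hfi l hl0).const_mul _).add (integrable_const _)
    have := integral_mono_ae hint1 hint2 hbnd
    rw [integral_add ((hfi l hl0).const_mul _) (integrable_const _),
      integral_const_mul, integral_const, hμ_def, measureReal_restrict_apply_univ,
      smul_eq_mul] at this
    calc ∫ ω, (X ω - α) * Real.exp (l * X ω) ∂μ
        ≤ ε / 2 * (∫ ω, Real.exp (l * X ω) ∂μ) + (ℙ S).toReal * (2 / (-l) * E) := this
      _ = ε / 2 * D + 2 / (-l) * E * A := by rw [← hA_def]; ring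
  -- key comparison of the error term
  have hKA : 2 / (-l) * E * A < ε / 2 * (c * E) := by
    have h4 : 4 * A < c * ε * (-l) := by
      rw [div_lt_iff₀ hcε] at hln
      linarith
    rw [div_mul_eq_mul_div, div_mul_eq_mul_div, div_lt_iff₀ hm]
    nlinarith [mul_lt_mul_of_pos_right h4 hEpos]
  -- conclusion
  have hfinal : N - α * D < ε * D := by
    have h5 : ε / 2 * (c * E) ≤ ε / 2 * D := by
      apply mul_le_mul_of_nonneg_left hD_lb (by positivity)
    linarith
  have hsub2 : N / D - α = (N - α * D) / D := by
    field_simp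
  have hge : 0 ≤ N / D - α := by
    rw [hsub2]
    exact div_nonneg hnn hD_pos.le
  rw [abs_of_nonneg hge, hsub2, div_lt_iff₀ hD_pos]
  linarith
end

section
/- Let $T$ be a random variable with values in $(0,+\infty]$, $\mathbb{P}(T < \infty) > 0$, with support minimum $\alpha \geq 0$ on $\{T < \infty\}$, and suppose $\mathbb{P}(T = \alpha) = 0$. Define $\varphi(\lambda) := \mathbb{E}(e^{\lambda T}\mathbf{1}(T < \infty))$ and $J(u) := \sup_{\lambda}\{\lambda u - \log\varphi(\lambda)\}$. Then $J(\alpha) = +\infty$. -/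
open MeasureTheory

/-- If the minimum `α` of the support of `T` (restricted to `{T < ∞}`) is not an atom,
i.e. `ℙ(T = α) = 0`, then the Cramér rate function `J(u) = sup_λ {λu - log φ(λ)}` of the
moment generating function `φ(λ) = E(e^{λT} 1(T < ∞))` satisfies `J(α) = +∞`. -/
theorem rate_function_infinite_at_support_min_of_no_atom
    {Ω : Type*} [MeasurableSpace Ω] (μ : Measure Ω) [IsProbabilityMeasure μ]
    (T : Ω → ENNReal) (hT : Measurable T)
    (hTpos : ∀ ω, 0 < T ω)
    (hfin : μ {ω | T ω ≠ ⊤} ≠ 0)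
    (φ : ℝ → ENNReal)
    (hφ : ∀ l : ℝ, φ l = ∫⁻ ω in {ω | T ω ≠ ⊤},
      ENNReal.ofReal (Real.exp (l * (T ω).toReal)) ∂μ)
    (J : ℝ → EReal)
    (hJ : ∀ u : ℝ, J u = ⨆ l : ℝ, (((l * u : ℝ) : EReal) - ENNReal.log (φ l)))
    (α : ℝ) (hα0 : 0 ≤ α)
    (hα : α = sInf {t : ℝ | μ {ω | T ω ≠ ⊤ ∧ (T ω).toReal ≤ t} ≠ 0})
    (hnoatom : μ {ω | T ω = ENNReal.ofReal α} = 0) :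
    J α = ⊤ := by
  classical
  have hTR : Measurable fun ω => (T ω).toReal := hT.ennreal_toReal
  have hStop : MeasurableSet {ω | T ω ≠ ⊤} := (hT (measurableSet_singleton ⊤)).compl
  have hmeasle : ∀ t : ℝ, MeasurableSet {ω | T ω ≠ ⊤ ∧ (T ω).toReal ≤ t} := by
    intro t
    exact hStop.inter (hTR measurableSet_Iic)
  -- Step A : for t < α the measure is 0
  have hbdd : BddBelow {t : ℝ | μ {ω | T ω ≠ ⊤ ∧ (T ω).toReal ≤ t} ≠ 0} := by
    refine ⟨0, fun t ht => ?_⟩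
    by_contra h
    push_neg at h
    apply ht
    have : {ω | T ω ≠ ⊤ ∧ (T ω).toReal ≤ t} = ∅ := by
      ext ω
      simp only [Set.mem_setOf_eq, Set.mem_empty_iff_false, iff_false, not_and, not_le]
      intro _
      exact lt_of_lt_of_le h ENNReal.toReal_nonneg
    simp [this]
  have hlt0 : ∀ t : ℝ, t < α → μ {ω | T ω ≠ ⊤ ∧ (T ω).toReal ≤ t} = 0 := by
    intro t ht
    by_contra h
    have : α ≤ t := hα ▸ csInf_le hbdd h
    linarith
  -- Step B : μ {T ≠ ⊤ ∧ toReal < α} = 0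
  have hBlt : μ {ω | T ω ≠ ⊤ ∧ (T ω).toReal < α} = 0 := by
    have hsub : {ω | T ω ≠ ⊤ ∧ (T ω).toReal < α} ⊆
        ⋃ q : {q : ℚ // (q : ℝ) < α}, {ω | T ω ≠ ⊤ ∧ (T ω).toReal ≤ (q : ℝ)} := by
      intro ω hω
      obtain ⟨q, hq1, hq2⟩ := exists_rat_btwn hω.2
      exact Set.mem_iUnion.2 ⟨⟨q, hq2⟩, hω.1, le_of_lt hq1⟩
    refine measure_mono_null hsub (measure_iUnion_null fun q => hlt0 _ q.2)
  -- Step C : μ {T ≠ ⊤ ∧ toReal ≤ α} = 0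
  have hBle : μ {ω | T ω ≠ ⊤ ∧ (T ω).toReal ≤ α} = 0 := by
    have hsub : {ω | T ω ≠ ⊤ ∧ (T ω).toReal ≤ α} ⊆
        {ω | T ω ≠ ⊤ ∧ (T ω).toReal < α} ∪ {ω | T ω = ENNReal.ofReal α} := by
      intro ω hω
      rcases lt_or_eq_of_le hω.2 with h | h
      · exact Or.inl ⟨hω.1, h⟩
      · refine Or.inr ?_
        simp only [Set.mem_setOf_eq]
        rw [← h, ENNReal.ofReal_toReal hω.1]
    refine measure_mono_null hsub ?_
    exact le_antisymm (le_trans (measure_union_le _ _) (by simp [hBlt, hnoatom])) zero_le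
  -- Step D : continuity from above
  set C : ℕ → Set Ω := fun n => {ω | T ω ≠ ⊤ ∧ (T ω).toReal ≤ α + 1 / (n + 1)} with hC
  have hCmeas : ∀ n, MeasurableSet (C n) := fun n => hmeasle _
  have hCanti : Antitone C := by
    intro m n hmn ω hω
    refine ⟨hω.1, le_trans hω.2 (add_le_add_right ?_ α)⟩
    apply one_div_le_one_div_of_le
    · positivity
    · have := (Nat.cast_le (α := ℝ)).2 hmn; linarith
  have hCinter : ⋂ n, C n = {ω | T ω ≠ ⊤ ∧ (T ω).toReal ≤ α} := by
    ext ω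
    simp only [Set.mem_iInter, hC, Set.mem_setOf_eq]
    constructor
    · intro h
      refine ⟨(h 0).1, ?_⟩
      by_contra hm
      push_neg at hm
      obtain ⟨n, hn⟩ := exists_nat_one_div_lt (by linarith : 0 < (T ω).toReal - α)
      exact absurd ((h n).2) (by push_neg; linarith [hn])
    · intro h n
      have : (0:ℝ) < 1/((n:ℝ)+1) := by positivity
      exact ⟨h.1, by linarith [h.2]⟩
  have htend : Filter.Tendsto (μ ∘ C) Filter.atTop (nhds 0) := by
    have := tendsto_measure_iInter_atTop (μ := μ)
      (fun n => (hCmeas n).nullMeasurableSet) hCanti ⟨0, measure_ne_top μ _⟩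
    rwa [hCinter, hBle] at this
  -- Main part : J α = ⊤ via iSup_eq_top
  rw [hJ, iSup_eq_top]
  intro b hb
  obtain ⟨M, hbM, -⟩ := EReal.exists_between_coe_real hb
  -- choose δ
  set ε : ENNReal := ENNReal.ofReal (Real.exp (-M - 1)) with hε
  have hεpos : 0 < ε := by positivity
  have hε2pos : 0 < ε / 2 := ENNReal.div_pos hεpos.ne' (by norm_num)
  obtain ⟨n₀, hn₀⟩ := (htend.eventually (gt_mem_nhds hε2pos)).exists
  set δ : ℝ := 1 / (n₀ + 1) with hδ
  have hδpos : 0 < δ := by positivity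
  -- choose k
  have hε2 : ε / 2 = ENNReal.ofReal (Real.exp (-M - 1) / 2) := by
    rw [hε, ENNReal.ofReal_div_of_pos (by norm_num)]
    norm_num
  obtain ⟨k, hk⟩ := exists_nat_gt ((-Real.log (Real.exp (-M - 1) / 2)) / δ)
  set l : ℝ := -(k : ℝ) with hl
  have hl0 : l ≤ 0 := by simp [hl]
  have hkey : Real.exp (l * δ) < Real.exp (-M - 1) / 2 := by
    have h1 : -Real.log (Real.exp (-M - 1) / 2) < k * δ := by
      rw [div_lt_iff₀ hδpos] at hk
      linarith
    have h2 : l * δ < Real.log (Real.exp (-M - 1) / 2) := by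
      rw [hl]; nlinarith
    calc Real.exp (l * δ) < Real.exp (Real.log (Real.exp (-M - 1) / 2)) :=
          Real.exp_lt_exp.2 h2
      _ = Real.exp (-M - 1) / 2 := Real.exp_log (by positivity)
  -- the constant c
  set c : ENNReal := μ (C n₀) + ENNReal.ofReal (Real.exp (l * δ)) with hc
  have hcε : c < ε := by
    have h2 : ENNReal.ofReal (Real.exp (l * δ)) < ε / 2 := by
      rw [hε2]
      exact (ENNReal.ofReal_lt_ofReal_iff (by positivity)).2 hkey
    calc c < ε / 2 + ε / 2 := ENNReal.add_lt_add hn₀ h2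
      _ = ε := ENNReal.add_halves ε
  have hcpos : 0 < c := lt_of_lt_of_le (by positivity) (le_add_self)
  have hctop : c ≠ ⊤ := (lt_of_lt_of_le hcε le_top).ne
  -- main integral bound : φ l ≤ ofReal (exp (l*α)) * c
  have hbound : φ l ≤ ENNReal.ofReal (Real.exp (l * α)) * c := by
    rw [hφ]
    set A : Set Ω := C n₀ with hA
    set B : Set Ω := {ω | T ω ≠ ⊤} \ A with hB
    have hB_meas : MeasurableSet B := hStop.diff (hCmeas n₀)
    have hsplit : {ω | T ω ≠ ⊤} = A ∪ B := by
      rw [hB, Set.union_diff_self, Set.union_eq_right.2]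
      intro ω hω; exact hω.1
    have hdisj : Disjoint A B := Set.disjoint_sdiff_right
    rw [hsplit, lintegral_union hB_meas hdisj]
    have hIA : ∫⁻ ω in A, ENNReal.ofReal (Real.exp (l * (T ω).toReal)) ∂μ
        ≤ ENNReal.ofReal (Real.exp (l * α)) * μ (C n₀) := by
      rw [← setLIntegral_const]
      refine lintegral_mono_ae ((ae_restrict_iff' (hCmeas n₀)).2 ?_)
      have hae : ∀ᵐ ω ∂μ, ω ∉ {ω | T ω ≠ ⊤ ∧ (T ω).toReal < α} :=
        (ae_iff.2 (by simpa using hBlt))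
      filter_upwards [hae] with ω hω hωA
      have hge : α ≤ (T ω).toReal := by
        by_contra h
        exact hω ⟨hωA.1, by push_neg at h; exact h⟩
      exact ENNReal.ofReal_le_ofReal
        (Real.exp_le_exp.2 (mul_le_mul_of_nonpos_left hge hl0))
    have hIB : ∫⁻ ω in B, ENNReal.ofReal (Real.exp (l * (T ω).toReal)) ∂μ
        ≤ ENNReal.ofReal (Real.exp (l * α)) * ENNReal.ofReal (Real.exp (l * δ)) := by
      have hBsub : ∀ ω ∈ B, α + δ ≤ (T ω).toReal := by
        intro ω hω
        have := hω.2
        simp only [hA, hC, Set.mem_setOf_eq, not_and, not_le] at this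
        exact le_of_lt (this hω.1)
      calc ∫⁻ ω in B, ENNReal.ofReal (Real.exp (l * (T ω).toReal)) ∂μ
          ≤ ∫⁻ _ in B, ENNReal.ofReal (Real.exp (l * (α + δ))) ∂μ := by
            refine lintegral_mono_ae ((ae_restrict_iff' hB_meas).2 ?_)
            filter_upwards with ω hω
            exact ENNReal.ofReal_le_ofReal
              (Real.exp_le_exp.2 (mul_le_mul_of_nonpos_left (hBsub ω hω) hl0))
        _ = ENNReal.ofReal (Real.exp (l * (α + δ))) * μ B := setLIntegral_const _ _
        _ ≤ ENNReal.ofReal (Real.exp (l * (α + δ))) * 1 := by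
            gcongr
            exact prob_le_one
        _ = ENNReal.ofReal (Real.exp (l * α)) * ENNReal.ofReal (Real.exp (l * δ)) := by
            rw [mul_one, mul_add, Real.exp_add, ENNReal.ofReal_mul (Real.exp_pos _).le]
    calc _ ≤ ENNReal.ofReal (Real.exp (l * α)) * μ (C n₀)
            + ENNReal.ofReal (Real.exp (l * α)) * ENNReal.ofReal (Real.exp (l * δ)) :=
          add_le_add hIA hIB
      _ = ENNReal.ofReal (Real.exp (l * α)) * c := by rw [hc, mul_add]
  -- conclude
  refine ⟨l, ?_⟩
  set r : ℝ := Real.log c.toReal with hr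
  have hlogc : ENNReal.log c = (r : EReal) := by
    rw [← ENNReal.ofReal_toReal hctop, ENNReal.log_ofReal_of_pos
      (ENNReal.toReal_pos hcpos.ne' hctop)]
  have hlogφ : ENNReal.log (φ l) ≤ ((l * α : ℝ) : EReal) + (r : EReal) := by
    calc ENNReal.log (φ l) ≤ ENNReal.log (ENNReal.ofReal (Real.exp (l * α)) * c) :=
          ENNReal.log_monotone hbound
      _ = ((l * α : ℝ) : EReal) + (r : EReal) := by
          rw [ENNReal.log_mul_add, ENNReal.log_ofReal_of_pos (Real.exp_pos _),
            Real.log_exp, hlogc]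
  have hrM : r < -M := by
    have hcr : c.toReal < Real.exp (-M - 1) := by
      have := ENNReal.toReal_lt_toReal hctop (by simp [hε] : ε ≠ ⊤) |>.2 hcε
      rwa [hε, ENNReal.toReal_ofReal (Real.exp_pos _).le] at this
    have : r < -M - 1 := by
      rw [hr, ← Real.log_exp (-M - 1)]
      exact Real.log_lt_log (ENNReal.toReal_pos hcpos.ne' hctop) hcr
    linarith
  calc b < (M : EReal) := hbM
    _ ≤ ((l * α : ℝ) : EReal) - (((l * α : ℝ) : EReal) + (r : EReal)) := by
        rw [← EReal.coe_add, ← EReal.coe_sub]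
        exact_mod_cast (by linarith : M ≤ l * α - (l * α + r))
    _ ≤ ((l * α : ℝ) : EReal) - ENNReal.log (φ l) :=
        EReal.sub_le_sub le_rfl hlogφ
end

section
/- Let $V \subseteq \mathbb{C}^n$ be open such that $U := V \cap \mathbb{R}^n$ is connected, and let $f : V \to \mathbb{C}$ be holomorphic. Then either $f \equiv 0$ on $U$, or the zero set $\{z \in U : f(z) = 0\}$ has $n$-dimensional Lebesgue measure zero. -/
open MeasureTheory Filter Topology Set


lemma aux_countable_zeros_1d {φ : ℝ → ℂ} {I : Set ℝ} (hI : IsPreconnected I)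
    (hφ : AnalyticOnNhd ℝ φ I) {t₁ : ℝ} (ht₁ : t₁ ∈ I) (h1 : φ t₁ ≠ 0) :
    Set.Countable {t ∈ I | φ t = 0} := by
  set Z := {t ∈ I | φ t = 0} with hZ
  have hiso : ∀ z ∈ Z, 𝓝[≠] z ⊓ Filter.principal Z = ⊥ := by
    intro z hz
    rcases (hφ z hz.1).eventually_eq_zero_or_eventually_ne_zero with h | h
    · exact absurd (hφ.eqOn_zero_of_preconnected_of_eventuallyEq_zero hI hz.1 h ht₁) h1
    · have h2 : ∀ᶠ t in 𝓝[≠] z ⊓ Filter.principal Z, φ t ≠ 0 :=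
        h.filter_mono inf_le_left
      have h3 : ∀ᶠ t in 𝓝[≠] z ⊓ Filter.principal Z, φ t = 0 :=
        Filter.eventually_inf_principal.mpr (Filter.Eventually.of_forall (fun t ht => ht.2))
      rw [← Filter.eventually_false_iff_eq_bot]
      filter_upwards [h2, h3] with t ht2 ht3
      exact ht2 ht3
  have : DiscreteTopology ↥Z := discreteTopology_subtype_iff.mpr hiso
  have : Countable ↥Z := TopologicalSpace.separableSpace_iff_countable.mp inferInstance
  exact Set.countable_coe_iff.mp this

noncomputable def auxA {n : ℕ} (v : Fin n → ℝ) (j : Fin n) :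
    (Fin n → ℝ) →ₗ[ℝ] (Fin n → ℝ) :=
  LinearMap.id + (LinearMap.proj j).smulRight (v - Pi.single j 1)

noncomputable def auxB {n : ℕ} (v : Fin n → ℝ) (j : Fin n) :
    (Fin n → ℝ) →ₗ[ℝ] (Fin n → ℝ) :=
  LinearMap.id - (LinearMap.proj j).smulRight ((v j)⁻¹ • (v - Pi.single j 1))

lemma auxA_apply {n : ℕ} (v : Fin n → ℝ) (j : Fin n) (x : Fin n → ℝ) :
    auxA v j x = x + x j • (v - Pi.single j 1) := rfl

lemma auxB_apply {n : ℕ} (v : Fin n → ℝ) (j : Fin n) (x : Fin n → ℝ) :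
    auxB v j x = x - x j • ((v j)⁻¹ • (v - Pi.single j 1)) := rfl

noncomputable def auxE {n : ℕ} (v : Fin n → ℝ) (j : Fin n) (hv : v j ≠ 0) :
    (Fin n → ℝ) ≃ₗ[ℝ] (Fin n → ℝ) := by
  refine LinearEquiv.ofLinear (auxA v j) (auxB v j) ?_ ?_
  · apply LinearMap.ext; intro y
    have hyj : (auxB v j y) j = (v j)⁻¹ * y j := by
      simp only [auxB_apply, Pi.sub_apply, Pi.smul_apply, smul_eq_mul, Pi.single_eq_same]
      field_simp
      ring
    simp only [LinearMap.comp_apply, LinearMap.id_apply, auxA_apply, hyj]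
    rw [auxB_apply, smul_smul, mul_comm ((v j)⁻¹)]
    abel
  · apply LinearMap.ext; intro x
    have hxj : (auxA v j x) j = v j * x j := by
      simp [auxA_apply, Pi.single_eq_same, mul_sub]
      ring
    simp only [LinearMap.comp_apply, LinearMap.id_apply, auxB_apply, hxj]
    rw [auxA_apply, smul_smul]
    rw [mul_comm (v j), mul_assoc, mul_inv_cancel₀ hv, mul_one]
    abel

lemma auxE_apply {n : ℕ} (v : Fin n → ℝ) (j : Fin n) (hv : v j ≠ 0) (x : Fin n → ℝ) :
    auxE v j hv x = x + x j • (v - Pi.single j 1) := rfl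

lemma auxE_single {n : ℕ} (v : Fin n → ℝ) (j : Fin n) (hv : v j ≠ 0) :
    auxE v j hv (Pi.single j 1) = v := by
  rw [auxE_apply, Pi.single_eq_same, one_smul]
  abel

/-- Non-dependent wrapper for `Fin.insertNth` over `ℝ`. -/
def insR {m : ℕ} (j : Fin (m + 1)) (t : ℝ) (x' : Fin m → ℝ) : Fin (m + 1) → ℝ :=
  Fin.insertNth j t x'

@[simp] lemma insR_apply_same {m : ℕ} (j : Fin (m + 1)) (t : ℝ) (x' : Fin m → ℝ) :
    insR j t x' j = t := by simp [insR]

@[simp] lemma insR_apply_succAbove {m : ℕ} (j : Fin (m + 1)) (t : ℝ) (x' : Fin m → ℝ)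
    (k : Fin m) : insR j t x' (j.succAbove k) = x' k := by simp [insR]

@[simp] lemma insR_removeNth {m : ℕ} (j : Fin (m + 1)) (t : ℝ) (x' : Fin m → ℝ) :
    j.removeNth (insR j t x') = x' := by simp [insR]

lemma insR_self_removeNth {m : ℕ} (j : Fin (m + 1)) (c : Fin (m + 1) → ℝ) :
    insR j (c j) (j.removeNth c) = c := by
  simp [insR, Fin.insertNth_self_removeNth]

lemma aux_insertNth_eq {m : ℕ} (j : Fin (m + 1)) (t : ℝ) (x' : Fin m → ℝ) :
    insR j t x' = insR j 0 x' + t • (Pi.single j 1 : Fin (m+1) → ℝ) := by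
  funext i
  refine Fin.succAboveCases j ?_ ?_ i
  · simp [Pi.single_eq_same]
  · intro k
    simp [Pi.single_eq_of_ne (Fin.succAbove_ne j k)]

lemma aux_local {m : ℕ} {g : (Fin (m + 1) → ℝ) → ℂ} {U : Set (Fin (m + 1) → ℝ)}
    (hUo : IsOpen U) (hgc : ContinuousOn g U)
    (hga : ∀ p w : Fin (m + 1) → ℝ,
      AnalyticOnNhd ℝ (fun t : ℝ => g (p + t • w)) {t : ℝ | p + t • w ∈ U})
    {a : Fin (m + 1) → ℝ} (haU : a ∈ U)
    {r : ℝ} (hr0 : 0 < r) (hball : Metric.ball a r ⊆ U)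
    {b : Fin (m + 1) → ℝ} (hb : b ∈ Metric.ball a r) (hgb : g b ≠ 0)
    {j : Fin (m + 1)} (hvj : (b - a) j ≠ 0) :
    ∃ N ∈ 𝓝 a, volume {x ∈ N | g x = 0} = 0 := by
  set v : Fin (m + 1) → ℝ := b - a with hv
  -- the linear change of variables
  set A : (Fin (m + 1) → ℝ) ≃L[ℝ] (Fin (m + 1) → ℝ) :=
    (auxE v j hvj).toContinuousLinearEquiv with hA
  have hAcoe : ∀ x, A x = auxE v j hvj x := fun x => rfl
  set c : Fin (m + 1) → ℝ := A.symm a with hc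
  have hAc : A c = a := A.apply_symm_apply a
  have hAsingle : A (Pi.single j 1) = v := auxE_single v j hvj
  set h : (Fin (m + 1) → ℝ) → ℂ := fun x => g (A x) with hhdef
  set W : Set (Fin (m + 1) → ℝ) := ⇑A ⁻¹' Metric.ball a r with hW
  have hWo : IsOpen W := Metric.isOpen_ball.preimage A.continuous
  have hhc : ContinuousOn h W :=
    hgc.comp A.continuous.continuousOn (fun x hx => hball hx)
  have hAline : ∀ (x' : Fin m → ℝ) (t : ℝ),
      A (insR j t x') = A (insR j 0 x') + t • v := by
    intro x' t
    rw [aux_insertNth_eq, map_add, _root_.map_smul, hAsingle]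
  have hha : ∀ x' : Fin m → ℝ,
      AnalyticOnNhd ℝ (fun t => h (insR j t x')) {t : ℝ | insR j t x' ∈ W} := by
    intro x'
    have heqf : (fun t => h (insR j t x')) =
        (fun t : ℝ => g (A (insR j 0 x') + t • v)) := by
      funext t
      show g (A (insR j t x')) = _
      rw [hAline]
    rw [heqf]
    intro t ht
    refine hga (A (insR j 0 x')) v t ?_
    show A (insR j 0 x') + t • v ∈ U
    rw [← hAline]
    exact hball ht
  have hcW : c ∈ W := by
    simp only [hW, Set.mem_preimage, hAc]
    exact Metric.mem_ball_self hr0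
  obtain ⟨δ, hδ0, hδW⟩ := Metric.isOpen_iff.mp hWo c hcW
  have hvnorm : 0 < ‖v‖ := by
    simpa using norm_pos_iff.mpr (fun h0 => hvj (by rw [h0]; rfl))
  set s : ℝ := r / ‖v‖ with hs
  have hs1 : 1 < s := (one_lt_div hvnorm).mpr (by simpa [hv, Metric.mem_ball, dist_eq_norm] using hb)
  have hs0 : 0 < s := lt_trans one_pos hs1
  set x'c : Fin m → ℝ := j.removeNth c with hx'c
  -- the line through `c` in direction `e j`, mapped by `A`
  have line2 : ∀ t : ℝ, A (insR j t x'c) = a + (t - c j) • v := by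
    have base : ∀ t : ℝ, A (insR j t x'c) =
        A (insR j 0 x'c) + t • v := hAline x'c
    have hself : A (insR j (c j) x'c) = a := by
      rw [hx'c, insR_self_removeNth, hAc]
    intro t
    have h1 := base t
    have h2 := base (c j)
    rw [hself] at h2
    rw [h1, sub_smul, h2]
    abel
  have memW : ∀ t : ℝ, |t - c j| < s → insR j t x'c ∈ W := by
    intro t ht
    simp only [hW, Set.mem_preimage, line2, Metric.mem_ball, dist_eq_norm]
    rw [add_sub_cancel_left, norm_smul, Real.norm_eq_abs]
    calc |t - c j| * ‖v‖ < s * ‖v‖ := by gcongr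
    _ = r := div_mul_cancel₀ r hvnorm.ne'
  set ψ : ℝ → ℂ := fun t => h (insR j t x'c) with hψdef
  set J : Set ℝ := Metric.ball (c j) s with hJ
  have hψ : AnalyticOnNhd ℝ ψ J :=
    fun t ht => hha x'c t (memW t (by have ht' : dist t (c j) < s := ht; simpa [Real.dist_eq] using ht'))
  have hcJ : c j ∈ J := Metric.mem_ball_self hs0
  have hmem1 : c j + 1 ∈ J := by
    simp only [hJ, Metric.mem_ball, Real.dist_eq, add_sub_cancel_left, abs_one]
    exact hs1
  have hψ1 : ψ (c j + 1) ≠ 0 := by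
    have : A (insR j (c j + 1) x'c) = b := by
      rw [line2]; simp [hv]
    simpa [hψdef, hhdef, this] using hgb
  have hψne : ¬ ∀ᶠ t in 𝓝 (c j), ψ t = 0 := by
    intro hev
    exact hψ1 (hψ.eqOn_zero_of_preconnected_of_eventuallyEq_zero
      ((convex_ball _ _).isPreconnected) hcJ hev hmem1)
  set δ' : ℝ := min δ s with hδ'
  have hδ'0 : 0 < δ' := lt_min hδ0 hs0
  have hδ'δ : δ' ≤ δ := min_le_left _ _
  have hδ's : δ' ≤ s := min_le_right _ _
  -- pick t₀ close to c j with ψ t₀ ≠ 0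
  obtain ⟨t₀, hψt₀, ht₀⟩ := ((Filter.not_eventually.mp hψne).and_eventually
    (Metric.ball_mem_nhds (c j) hδ'0)).exists
  have ht₀' : |t₀ - c j| < δ' := by simpa [Real.dist_eq] using ht₀
  -- continuity in the transverse variable
  have hins_cont : Continuous (fun x' : Fin m → ℝ => insR j t₀ x') := by
    apply continuous_pi; intro i
    refine Fin.succAboveCases j ?_ (fun k => ?_) i
    · simpa using continuous_const
    · simpa using continuous_apply k
  have hq_cont : ContinuousAt (fun x' : Fin m → ℝ => h (insR j t₀ x')) x'c := by
    have hmem : insR j t₀ x'c ∈ W := memW t₀ (lt_of_lt_of_le ht₀' hδ's)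
    exact (hhc.continuousAt (hWo.mem_nhds hmem)).comp hins_cont.continuousAt
  obtain ⟨ε, hε0, hεball⟩ := Metric.eventually_nhds_iff_ball.mp
    (hq_cont.eventually_ne hψt₀)
  set ε' : ℝ := min ε δ' with hε'
  have hε'0 : 0 < ε' := lt_min hε0 hδ'0
  set N : Set (Fin (m + 1) → ℝ) :=
    {x | x j ∈ Metric.ball (c j) δ' ∧ j.removeNth x ∈ Metric.ball x'c ε'} with hN
  have hrem_cont : Continuous (fun x : Fin (m + 1) → ℝ => j.removeNth x) :=
    continuous_pi fun k => continuous_apply _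
  have hNopen : IsOpen N := by
    have : N = (fun x : Fin (m + 1) → ℝ => x j) ⁻¹' Metric.ball (c j) δ' ∩
        (fun x : Fin (m + 1) → ℝ => j.removeNth x) ⁻¹' Metric.ball x'c ε' := rfl
    rw [this]
    exact (Metric.isOpen_ball.preimage (continuous_apply j)).inter
      (Metric.isOpen_ball.preimage hrem_cont)
  have hcN : c ∈ N :=
    ⟨Metric.mem_ball_self hδ'0, by rw [← hx'c]; exact Metric.mem_ball_self hε'0⟩
  have hNW : N ⊆ Metric.ball c δ := by
    intro x hx
    rw [Metric.mem_ball]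
    rw [dist_pi_lt_iff hδ0]
    intro i
    refine Fin.succAboveCases j ?_ (fun k => ?_) i
    · exact lt_of_lt_of_le (by simpa [Real.dist_eq] using hx.1) hδ'δ
    · calc dist (x (j.succAbove k)) (c (j.succAbove k))
          = dist (j.removeNth x k) (x'c k) := rfl
        _ ≤ dist (j.removeNth x) x'c := dist_le_pi_dist _ _ k
        _ < ε' := hx.2
        _ ≤ δ := le_trans (min_le_right _ _) hδ'δ
  -- the zero set of `h` in `N`
  set S : Set (Fin (m + 1) → ℝ) := {x ∈ N | h x = 0} with hS
  have hNsubW : N ⊆ W := fun x hx => hδW (hNW hx)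
  have hScont : ContinuousOn h N := hhc.mono hNsubW
  have hopen' : IsOpen {x ∈ N | h x ≠ 0} := by
    have : {x ∈ N | h x ≠ 0} = N ∩ h ⁻¹' ({0}ᶜ) := rfl
    rw [this]
    exact hScont.isOpen_inter_preimage hNopen isOpen_compl_singleton
  have hSmeas : MeasurableSet S := by
    have : S = N \ {x ∈ N | h x ≠ 0} := by
      ext x; simp only [hS, Set.mem_setOf_eq, Set.mem_diff]; tauto
    rw [this]
    exact hNopen.measurableSet.diff hopen'.measurableSet
  -- countable slices
  have hslice : ∀ x' : Fin m → ℝ, volume {t : ℝ | insR j t x' ∈ S} = 0 := by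
    intro x'
    by_cases hx' : x' ∈ Metric.ball x'c ε'
    · have hsub : {t : ℝ | insR j t x' ∈ S} ⊆
          {t ∈ Metric.ball (c j) δ' | h (insR j t x') = 0} := by
        intro t ht
        exact ⟨by simpa using ht.1.1, ht.2⟩
      have hmapsW : ∀ t ∈ Metric.ball (c j) δ', insR j t x' ∈ W := by
        intro t ht
        apply hNsubW
        exact ⟨by simpa using ht, by simpa using hx'⟩
      have hcount := aux_countable_zeros_1d (φ := fun t => h (insR j t x'))
        (convex_ball (c j) δ').isPreconnected
        (fun t ht => hha x' t (hmapsW t ht))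
        (t₁ := t₀) ht₀
        (hεball x' (Metric.ball_subset_ball (min_le_left ε δ') hx'))
      exact measure_mono_null hsub (hcount.measure_zero _)
    · have : {t : ℝ | insR j t x' ∈ S} = ∅ := by
        ext t
        simp only [Set.mem_setOf_eq, Set.mem_empty_iff_false, iff_false]
        intro hts
        exact hx' (by simpa using hts.1.2)
      rw [this]; simp
  -- Fubini
  set E : (Fin (m + 1) → ℝ) ≃ᵐ ℝ × (Fin m → ℝ) :=
    MeasurableEquiv.piFinSuccAbove (fun _ : Fin (m + 1) => ℝ) j with hE
  have hEP := volume_preserving_piFinSuccAbove (fun _ : Fin (m + 1) => ℝ) j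
  set T : Set (ℝ × (Fin m → ℝ)) := ⇑E.symm ⁻¹' S with hT
  have hTmeas : MeasurableSet T := E.symm.measurable hSmeas
  have hEsymm : ∀ (t : ℝ) (x' : Fin m → ℝ), E.symm (t, x') = insR j t x' := by
    intro t x'
    simp [hE, MeasurableEquiv.piFinSuccAbove, insR, Fin.insertNthEquiv]
  have hpre : ⇑E ⁻¹' T = S := by
    ext x
    simp [hT, Set.mem_preimage]
  have hvolS : volume S = volume T := by
    rw [← hpre]
    exact hEP.measure_preimage hTmeas.nullMeasurableSet
  have hvolT : volume T = 0 := by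
    have hswap := Measure.measurePreserving_swap (μ := (volume : Measure (Fin m → ℝ)))
      (ν := (volume : Measure ℝ))
    have hT2meas : MeasurableSet (Prod.swap ⁻¹' T : Set ((Fin m → ℝ) × ℝ)) :=
      measurable_swap hTmeas
    have h1 : volume T = ((volume : Measure (Fin m → ℝ)).prod (volume : Measure ℝ))
        (Prod.swap ⁻¹' T) := by
      rw [Measure.volume_eq_prod]
      exact (hswap.measure_preimage (by
        rw [← Measure.volume_eq_prod]; exact hTmeas.nullMeasurableSet)).symm
    rw [h1, Measure.measure_prod_null hT2meas]
    refine ae_of_all _ (fun x' => ?_)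
    have heq : Prod.mk x' ⁻¹' (Prod.swap ⁻¹' T) = {t : ℝ | insR j t x' ∈ S} := by
      ext t
      simp only [Set.mem_preimage, Set.mem_setOf_eq, hT, Prod.swap_prod_mk, hEsymm]
    show volume (Prod.mk x' ⁻¹' (Prod.swap ⁻¹' T)) = 0
    rw [heq]
    exact hslice x'
  have hvolS0 : volume S = 0 := hvolS.trans hvolT
  -- map back through `A`
  refine ⟨⇑A.symm ⁻¹' N, (hNopen.preimage A.symm.continuous).mem_nhds
    (by rw [Set.mem_preimage, ← hc]; exact hcN), ?_⟩
  have himg : {y ∈ ⇑A.symm ⁻¹' N | g y = 0} = ⇑A '' S := by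
    ext y
    constructor
    · rintro ⟨hyN, hy0⟩
      refine ⟨A.symm y, ⟨hyN, ?_⟩, A.apply_symm_apply y⟩
      show g (A (A.symm y)) = 0
      rw [A.apply_symm_apply]; exact hy0
    · rintro ⟨x, ⟨hxN, hx0⟩, rfl⟩
      exact ⟨by simpa using hxN, hx0⟩
  rw [himg]
  have hcoe : ⇑A = ⇑((auxE v j hvj).toLinearMap) := rfl
  rw [hcoe, Measure.addHaar_image_linearMap, hvolS0, mul_zero]

lemma aux_local' {n : ℕ} {g : (Fin n → ℝ) → ℂ} {U : Set (Fin n → ℝ)}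
    (hUo : IsOpen U) (hgc : ContinuousOn g U)
    (hga : ∀ p w : Fin n → ℝ,
      AnalyticOnNhd ℝ (fun t : ℝ => g (p + t • w)) {t : ℝ | p + t • w ∈ U})
    {a : Fin n → ℝ} (haU : a ∈ U)
    (hne : ¬ ∀ᶠ x in 𝓝 a, g x = 0) :
    ∃ N ∈ 𝓝 a, volume {x ∈ N | g x = 0} = 0 := by
  by_cases hga₀ : g a = 0
  · obtain ⟨r, hr0, hball⟩ := Metric.isOpen_iff.mp hUo a haU
    have hfreq : ∃ᶠ x in 𝓝 a, ¬ g x = 0 := Filter.not_eventually.mp hne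
    have hmem : ∀ᶠ x in 𝓝 a, x ∈ Metric.ball a r :=
      Metric.isOpen_ball.eventually_mem (Metric.mem_ball_self hr0)
    obtain ⟨b, hgb, hb⟩ := (hfreq.and_eventually hmem).exists
    have hba : b - a ≠ 0 := by
      intro h0
      rw [sub_eq_zero] at h0
      exact hgb (h0 ▸ hga₀)
    obtain ⟨j, hvj⟩ := Function.ne_iff.mp hba
    obtain ⟨m, rfl⟩ := Nat.exists_eq_succ_of_ne_zero (Nat.pos_iff_ne_zero.mp j.pos)
    exact aux_local hUo hgc hga haU hr0 hball hb hgb hvj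
  · have hev : ∀ᶠ x in 𝓝 a, g x ≠ 0 :=
      (hgc.continuousAt (hUo.mem_nhds haU)).eventually_ne hga₀
    obtain ⟨N, hN, hN2⟩ := Filter.eventually_iff_exists_mem.mp hev
    refine ⟨N, hN, ?_⟩
    have : {x ∈ N | g x = 0} = ∅ := by
      ext x
      simp only [Set.mem_setOf_eq, Set.mem_empty_iff_false, iff_false]
      rintro ⟨hxN, hx0⟩
      exact hN2 x hxN hx0
    rw [this]
    exact measure_empty

lemma aux_propagate {n : ℕ} {g : (Fin n → ℝ) → ℂ} {U : Set (Fin n → ℝ)}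
    (hga : ∀ p w : Fin n → ℝ,
      AnalyticOnNhd ℝ (fun t : ℝ => g (p + t • w)) {t : ℝ | p + t • w ∈ U})
    {x : Fin n → ℝ} {r : ℝ} (hball : Metric.ball x r ⊆ U)
    {y : Fin n → ℝ} (hy : y ∈ Metric.ball x (r / 2)) (hy0 : ∀ᶠ u in 𝓝 y, g u = 0)
    {z : Fin n → ℝ} (hz : z ∈ Metric.ball x (r / 2)) : g z = 0 := by
  have hr0 : 0 < r := by
    have h1 : (0 : ℝ) ≤ dist y x := dist_nonneg
    have h2 : dist y x < r / 2 := Metric.mem_ball.mp hy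
    linarith
  have hhalf : Metric.ball x (r / 2) ⊆ Metric.ball x r :=
    Metric.ball_subset_ball (by linarith)
  set w : Fin n → ℝ := z - y with hw
  set φ : ℝ → ℂ := fun t => g (y + t • w) with hφ
  set I : Set ℝ := {t : ℝ | y + t • w ∈ Metric.ball x r} with hI
  have hIline : I = ⇑(AffineMap.lineMap y z) ⁻¹' Metric.ball x r := by
    ext t
    simp only [hI, Set.mem_setOf_eq, Set.mem_preimage, AffineMap.lineMap_apply_module', hw]
    rw [add_comm]
  have hIconv : Convex ℝ I := by
    rw [hIline]
    exact (convex_ball x r).affine_preimage _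
  have hI0 : (0 : ℝ) ∈ I := by
    simp only [hI, Set.mem_setOf_eq, zero_smul, add_zero]
    exact hhalf hy
  have hI1 : (1 : ℝ) ∈ I := by
    simp only [hI, Set.mem_setOf_eq, one_smul, hw, add_sub_cancel]
    exact hhalf hz
  have hφan : AnalyticOnNhd ℝ φ I := fun t ht => hga y w t (hball ht)
  have hline_cont : Continuous (fun t : ℝ => y + t • w) :=
    continuous_const.add (continuous_id.smul continuous_const)
  have hev0 : φ =ᶠ[𝓝 (0 : ℝ)] 0 := by
    have h0 : (fun t : ℝ => y + t • w) 0 = y := by simp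
    have := (hline_cont.tendsto 0).eventually (h0 ▸ hy0)
    exact this.mono fun t ht => ht
  have hEq : Set.EqOn φ 0 I :=
    hφan.eqOn_zero_of_preconnected_of_eventuallyEq_zero hIconv.isPreconnected hI0 hev0
  have := hEq hI1
  simpa [hφ, hw] using this

/-- Let `V ⊆ ℂⁿ` be open with `U := V ∩ ℝⁿ` connected, and let `f : V → ℂ` be
holomorphic. Then either `f` vanishes identically on `U`, or the real zero set
`{x ∈ U : f(x) = 0}` has `n`-dimensional Lebesgue measure zero. -/
theorem real_zero_set_of_holomorphic
    (n : ℕ) (V : Set (Fin n → ℂ)) (hV : IsOpen V)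
    (f : (Fin n → ℂ) → ℂ) (hf : DifferentiableOn ℂ f V)
    (U : Set (Fin n → ℝ))
    (hU : U = {x : Fin n → ℝ | (fun i => (x i : ℂ)) ∈ V})
    (hUconn : IsConnected U) :
    (∀ x ∈ U, f (fun i => (x i : ℂ)) = 0) ∨
      volume {x : Fin n → ℝ | x ∈ U ∧ f (fun i => (x i : ℂ)) = 0} = 0 := by
  set L : (Fin n → ℝ) →L[ℝ] (Fin n → ℂ) :=
    ContinuousLinearMap.pi (fun i => Complex.ofRealCLM.comp (ContinuousLinearMap.proj i)) with hL
  have hLapp : ∀ x : Fin n → ℝ, L x = fun i => (x i : ℂ) := fun x => rfl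
  set g : (Fin n → ℝ) → ℂ := fun x => f (fun i => (x i : ℂ)) with hg
  have hUo : IsOpen U := by
    rw [hU]
    have : {x : Fin n → ℝ | (fun i => (x i : ℂ)) ∈ V} = ⇑L ⁻¹' V := by
      ext x; simp [hLapp]
    rw [this]
    exact hV.preimage L.continuous
  have hmapsV : ∀ x ∈ U, L x ∈ V := by
    intro x hx
    rw [hLapp]
    rw [hU] at hx
    exact hx
  have hgc : ContinuousOn g U := by
    have : g = f ∘ ⇑L := by funext y; simp [hg, hLapp]
    rw [this]
    exact (hf.continuousOn).comp L.continuous.continuousOn hmapsV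
  have hga : ∀ p w : Fin n → ℝ,
      AnalyticOnNhd ℝ (fun t : ℝ => g (p + t • w)) {t : ℝ | p + t • w ∈ U} := by
    intro p w
    set Φ : ℂ → (Fin n → ℂ) := fun ζ => L p + ζ • L w with hΦ
    have hΦdiff : Differentiable ℂ Φ :=
      (differentiable_const _).add (differentiable_id.smul_const (L w))
    have hΩ : IsOpen (Φ ⁻¹' V) := hV.preimage hΦdiff.continuous
    have hfΦ : DifferentiableOn ℂ (f ∘ Φ) (Φ ⁻¹' V) :=
      hf.comp hΦdiff.differentiableOn (fun ζ hζ => hζ)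
    have han : AnalyticOnNhd ℂ (f ∘ Φ) (Φ ⁻¹' V) := hfΦ.analyticOnNhd hΩ
    have hreal : AnalyticOnNhd ℝ (fun t : ℝ => (f ∘ Φ) ((t : ℂ)))
        {t : ℝ | ((t : ℂ)) ∈ Φ ⁻¹' V} :=
      (han.restrictScalars).comp
        (Complex.ofRealCLM.analyticOnNhd _) (fun t ht => ht)
    have hkey : ∀ t : ℝ, Φ ((t : ℂ)) = L (p + t • w) := by
      intro t
      show L p + (t : ℂ) • L w = L (p + t • w)
      rw [map_add, _root_.map_smul, ← Complex.coe_algebraMap, algebraMap_smul]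
    have heqf : (fun t : ℝ => g (p + t • w)) = fun t : ℝ => (f ∘ Φ) ((t : ℂ)) := by
      funext t
      show f (fun i => ((p + t • w) i : ℂ)) = f (Φ ((t : ℂ)))
      rw [hkey, hLapp]
    rw [heqf]
    intro t ht
    refine hreal t ?_
    show Φ ((t : ℂ)) ∈ V
    rw [hkey]
    exact hmapsV _ ht
  by_cases hT : ∃ x ∈ U, ∀ᶠ y in 𝓝 x, g y = 0
  · left
    obtain ⟨x₀, hx₀, hev₀⟩ := hT
    set T : Set (Fin n → ℝ) := {x | x ∈ U ∧ ∀ᶠ u in 𝓝 x, g u = 0} with hTdef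
    have hprop : ∀ x ∈ U, ∀ r : ℝ, Metric.ball x r ⊆ U →
        ∀ y ∈ Metric.ball x (r / 2), (∀ᶠ u in 𝓝 y, g u = 0) →
        Metric.ball x (r / 2) ⊆ T := by
      intro x hx r hball y hy hy0 z hz
      have hz0 : ∀ u ∈ Metric.ball x (r / 2), g u = 0 := fun u hu =>
        aux_propagate hga hball hy hy0 hu
      refine ⟨hball (Metric.ball_subset_ball (by
        have : (0:ℝ) ≤ dist y x := dist_nonneg
        have := hy.out
        linarith) hz), ?_⟩
      exact Filter.eventually_of_mem
        (Metric.isOpen_ball.mem_nhds hz) hz0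
    have hTo : IsOpen T := by
      rw [Metric.isOpen_iff]
      intro x hx
      obtain ⟨r, hr0, hball⟩ := Metric.isOpen_iff.mp hUo x hx.1
      refine ⟨r / 2, by linarith, ?_⟩
      exact hprop x hx.1 r hball x (Metric.mem_ball_self (by linarith)) hx.2
    have hTc : closure T ∩ U ⊆ T := by
      rintro x ⟨hxc, hxU⟩
      obtain ⟨r, hr0, hball⟩ := Metric.isOpen_iff.mp hUo x hxU
      obtain ⟨y, hyT, hyd⟩ := Metric.mem_closure_iff.mp hxc (r / 2) (by linarith)
      have hy : y ∈ Metric.ball x (r / 2) := by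
        rw [Metric.mem_ball, dist_comm]; exact hyd
      exact hprop x hxU r hball y hy hyT.2 (Metric.mem_ball_self (by linarith))
    have hsub : U ⊆ T :=
      hUconn.isPreconnected.subset_of_closure_inter_subset hTo
        ⟨x₀, hx₀, hx₀, hev₀⟩ hTc
    intro x hx
    exact ((hsub hx).2).self_of_nhds
  · right
    push_neg at hT
    apply measure_null_of_locally_null
    intro x hx
    obtain ⟨N, hN, hNvol⟩ := aux_local' hUo hgc hga hx.1 (Filter.not_eventually.mpr (hT x hx.1))
    refine ⟨N ∩ {y : Fin n → ℝ | y ∈ U ∧ f (fun i => (y i : ℂ)) = 0},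
      Filter.inter_mem (mem_nhdsWithin_of_mem_nhds hN) self_mem_nhdsWithin, ?_⟩
    refine measure_mono_null ?_ hNvol
    rintro y ⟨hyN, hyU, hy0⟩
    exact ⟨hyN, hy0⟩
end

section
/- Let $b : \mathbb{R}_+ \to (0,1]$ be a nonincreasing-in-the-sense $b_s \geq b_t$ for $s \leq t$ function, and suppose there exist constants $J \in \mathbb{R}$, an integer $m \geq 2$, and for every $\epsilon > 0$ a time $t_\epsilon$ such that for all $t \geq t_\epsilon$: $b_t \leq (2 + m^2 c)e^{-tJ + t\epsilon} + e^{t\epsilon}\sum_{j=2}^{m} K_j\, e^{-t\frac{j}{m}J}\, b_{t(1 - j/m)}$ for suitable nonnegative combinatorial constants $K_j$ bounded by $m^2 c$ ($c \geq 1$ fixed). Then $x := \limsup_{t\to\infty} \frac{1}{t}\log b_t$ satisfies $x \leq -J$. -/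
open Filter Topology

set_option maxHeartbeats 1000000

/-- Bootstrap inequality for decay rates: if `b : ℝ₊ → (0,1]` is nonincreasing and
satisfies, for every `ε > 0` and all large `t`,
`b_t ≤ (2 + m²c) e^{-tJ + tε} + e^{tε} ∑_{j=2}^m K_j e^{-t (j/m) J} b_{t(1-j/m)}`
with `0 ≤ K_j ≤ m²c`, then `limsup_{t→∞} (1/t) log b_t ≤ -J`. -/
theorem bootstrap_decay_rate
    (b : ℝ → ℝ)
    (hb : ∀ t : ℝ, 0 ≤ t → 0 < b t ∧ b t ≤ 1)
    (hmono : ∀ s t : ℝ, 0 ≤ s → s ≤ t → b t ≤ b s)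
    (J : ℝ) (m : ℕ) (hm : 2 ≤ m) (c : ℝ) (hc : 1 ≤ c)
    (K : ℕ → ℝ) (hK : ∀ j, 0 ≤ K j ∧ K j ≤ (m : ℝ) ^ 2 * c)
    (hrec : ∀ ε : ℝ, 0 < ε → ∃ tε : ℝ, ∀ t : ℝ, tε ≤ t →
      b t ≤ (2 + (m : ℝ) ^ 2 * c) * Real.exp (-t * J + t * ε) +
        Real.exp (t * ε) * ∑ j ∈ Finset.Icc 2 m,
          K j * Real.exp (-t * ((j : ℝ) / m) * J) * b (t * (1 - (j : ℝ) / m))) :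
    Filter.limsup (fun t : ℝ => (((1 / t) * Real.log (b t) : ℝ) : EReal)) atTop
      ≤ ((-J : ℝ) : EReal) := by
  by_contra hcon
  push_neg at hcon
  set f : ℝ → EReal := fun t : ℝ => (((1 / t) * Real.log (b t) : ℝ) : EReal) with hfdef
  have hm2 : (2:ℝ) ≤ (m:ℝ) := by exact_mod_cast hm
  have hm0 : (0:ℝ) < (m:ℝ) := by linarith
  -- limsup ≤ 0, so it is not ⊤
  have hev0 : ∀ᶠ t in atTop, f t ≤ ((0:ℝ) : EReal) := by
    filter_upwards [eventually_ge_atTop (1:ℝ)] with t ht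
    have ht0 : (0:ℝ) < t := by linarith
    obtain ⟨hb1, hb2⟩ := hb t ht0.le
    have h : (1 / t) * Real.log (b t) ≤ 0 :=
      mul_nonpos_of_nonneg_of_nonpos (by positivity) (Real.log_nonpos hb1.le hb2)
    exact EReal.coe_le_coe_iff.mpr h
  have hx_le0 : Filter.limsup f atTop ≤ ((0:ℝ) : EReal) :=
    Filter.limsup_le_of_le (by isBoundedDefault) hev0
  have hxtop : Filter.limsup f atTop ≠ ⊤ :=
    ne_top_of_le_ne_top (EReal.coe_ne_top 0) hx_le0
  have hxbot : Filter.limsup f atTop ≠ ⊥ :=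
    ((EReal.bot_lt_coe (-J)).trans hcon).ne'
  set X := (Filter.limsup f atTop).toReal with hXdef
  have hX : (X : EReal) = Filter.limsup f atTop := EReal.coe_toReal hxtop hxbot
  have hJX : -J < X := by
    rw [← hX] at hcon; exact EReal.coe_lt_coe_iff.mp hcon
  have hJX0 : 0 < J + X := by linarith
  set η := (J + X) / (2 * (m:ℝ)) with hηdef
  have hη : 0 < η := by positivity
  -- eventual bound for b from the limsup
  have hlt : Filter.limsup f atTop < ((X + η : ℝ) : EReal) := by
    rw [← hX]; exact EReal.coe_lt_coe_iff.mpr (by linarith)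
  have hev : ∀ᶠ t in atTop, f t < ((X + η : ℝ) : EReal) :=
    Filter.eventually_lt_of_limsup_lt hlt
  obtain ⟨T0, hT0⟩ := Filter.eventually_atTop.mp (hev.and (eventually_ge_atTop (1:ℝ)))
  set T := max T0 1 with hTdef
  have hbound : ∀ s : ℝ, T ≤ s → b s ≤ Real.exp (s * (X + η)) := by
    intro s hs
    have hs1 : (1:ℝ) ≤ s := le_trans (le_max_right _ _) hs
    have hs0 : (0:ℝ) < s := by linarith
    obtain ⟨h1, _⟩ := hT0 s (le_trans (le_max_left _ _) hs)
    have h1' : (1/s) * Real.log (b s) < X + η := EReal.coe_lt_coe_iff.mp h1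
    have hlog : Real.log (b s) ≤ s * (X + η) := by
      have h2 : Real.log (b s) / s < X + η := by rwa [one_div, inv_mul_eq_div] at h1'
      have := (div_lt_iff₀ hs0).mp h2
      linarith [this]
    calc b s = Real.exp (Real.log (b s)) := (Real.exp_log (hb s hs0.le).1).symm
      _ ≤ Real.exp (s * (X + η)) := Real.exp_le_exp.mpr hlog
  have hkey : ∀ s : ℝ, s = 0 ∨ T ≤ s → b s ≤ Real.exp (s * (X + η)) := by
    rintro s (rfl | hs)
    · simpa using (hb 0 le_rfl).2
    · exact hbound s hs
  obtain ⟨t₁, ht₁⟩ := hrec η hη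
  set ρ₂ := X + η - (2/(m:ℝ)) * (J + X + η) with hρ₂def
  set ρ := max (-J + η) (η + ρ₂) with hρdef
  have hηm : η * (2*(m:ℝ)) = J + X := by
    rw [hηdef]; field_simp
  have hρX : ρ < X := by
    apply max_lt
    · have : η < J + X := by nlinarith
      linarith
    · have h1 : 2*η < (2/(m:ℝ))*(J+X+η) := by
        rw [div_mul_eq_mul_div, lt_div_iff₀ hm0]; nlinarith
      rw [hρ₂def]; linarith
  set C := 2 + (m:ℝ)^2*c + (m:ℝ)^3*c with hCdef
  have hCpos : (0:ℝ) < C := by positivity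
  have hC2 : (2:ℝ) ≤ C := by nlinarith [pow_pos hm0 2, pow_pos hm0 3]
  have hmain : ∀ t : ℝ, max (max t₁ 1) ((m:ℝ)*T) ≤ t → b t ≤ C * Real.exp (t * ρ) := by
    intro t ht
    have ht1 : (1:ℝ) ≤ t := le_trans (le_trans (le_max_right t₁ 1) (le_max_left _ _)) ht
    have ht0 : (0:ℝ) < t := by linarith
    have htt₁ : t₁ ≤ t := le_trans (le_trans (le_max_left t₁ 1) (le_max_left _ _)) ht
    have htm : (m:ℝ)*T ≤ t := le_trans (le_max_right _ _) ht
    have hineq := ht₁ t htt₁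
    have hterm1 : (2 + (m:ℝ)^2*c) * Real.exp (-t*J + t*η)
        ≤ (2 + (m:ℝ)^2*c) * Real.exp (t*ρ) := by
      apply mul_le_mul_of_nonneg_left _ (by positivity)
      apply Real.exp_le_exp.mpr
      have h := mul_le_mul_of_nonneg_left (le_max_left (-J+η) (η+ρ₂)) ht0.le
      calc -t*J + t*η = t*(-J+η) := by ring
        _ ≤ t*ρ := h
    have hsummand : ∀ j ∈ Finset.Icc 2 m,
        K j * Real.exp (-t * ((j:ℝ)/m) * J) * b (t * (1 - (j:ℝ)/m))
          ≤ (m:ℝ)^2*c * Real.exp (t * ρ₂) := by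
      intro j hj
      obtain ⟨hj2, hjm⟩ := Finset.mem_Icc.mp hj
      have hj2' : (2:ℝ) ≤ (j:ℝ) := by exact_mod_cast hj2
      have hjm' : (j:ℝ) ≤ (m:ℝ) := by exact_mod_cast hjm
      have hfrac0 : 0 ≤ 1 - (j:ℝ)/m := by
        rw [sub_nonneg, div_le_one hm0]; exact hjm'
      have hs0 : 0 ≤ t * (1 - (j:ℝ)/m) := mul_nonneg ht0.le hfrac0
      have hbs : b (t * (1 - (j:ℝ)/m)) ≤ Real.exp ((t * (1 - (j:ℝ)/m)) * (X + η)) := by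
        apply hkey
        rcases eq_or_lt_of_le hjm with h | h
        · left; rw [h, div_self hm0.ne']; ring
        · right
          have hj1 : (j:ℝ) + 1 ≤ (m:ℝ) := by exact_mod_cast h
          have h1m : (1:ℝ)/m ≤ 1 - (j:ℝ)/m := by
            have h3 : (j:ℝ)/m + 1/m ≤ 1 := by
              rw [← add_div, div_le_one hm0]; linarith
            linarith
          calc T = ((m:ℝ)*T)/m := by field_simp
            _ ≤ t/m := by gcongr
            _ = t * (1/m) := by ring
            _ ≤ t * (1 - (j:ℝ)/m) := by
                exact mul_le_mul_of_nonneg_left h1m ht0.le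
      have hbpos : 0 ≤ b (t * (1 - (j:ℝ)/m)) := (hb _ hs0).1.le
      have hstep : K j * Real.exp (-t * ((j:ℝ)/m) * J) * b (t * (1 - (j:ℝ)/m))
          ≤ ((m:ℝ)^2*c * Real.exp (-t * ((j:ℝ)/m) * J)) *
              Real.exp ((t * (1 - (j:ℝ)/m)) * (X + η)) :=
        mul_le_mul (mul_le_mul_of_nonneg_right (hK j).2 (Real.exp_nonneg _)) hbs hbpos
          (by positivity)
      have hexp : Real.exp (-t * ((j:ℝ)/m) * J) * Real.exp ((t * (1 - (j:ℝ)/m)) * (X + η))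
          = Real.exp (t * ((X+η) - ((j:ℝ)/m)*(J+X+η))) := by
        rw [← Real.exp_add]; congr 1; ring
      have hjm2 : (2:ℝ)/m ≤ (j:ℝ)/m := by gcongr
      have hexp2 : t * ((X+η) - ((j:ℝ)/m)*(J+X+η)) ≤ t * ρ₂ := by
        apply mul_le_mul_of_nonneg_left _ ht0.le
        rw [hρ₂def]
        have := mul_le_mul_of_nonneg_right hjm2 (by linarith : (0:ℝ) ≤ J+X+η)
        linarith
      calc K j * Real.exp (-t * ((j:ℝ)/m) * J) * b (t * (1 - (j:ℝ)/m))
          ≤ ((m:ℝ)^2*c * Real.exp (-t * ((j:ℝ)/m) * J)) *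
              Real.exp ((t * (1 - (j:ℝ)/m)) * (X + η)) := hstep
        _ = (m:ℝ)^2*c * (Real.exp (-t * ((j:ℝ)/m) * J) *
              Real.exp ((t * (1 - (j:ℝ)/m)) * (X + η))) := by ring
        _ = (m:ℝ)^2*c * Real.exp (t * ((X+η) - ((j:ℝ)/m)*(J+X+η))) := by rw [hexp]
        _ ≤ (m:ℝ)^2*c * Real.exp (t*ρ₂) :=
            mul_le_mul_of_nonneg_left (Real.exp_le_exp.mpr hexp2) (by positivity)
    have hsum : (∑ j ∈ Finset.Icc 2 m,
        K j * Real.exp (-t*((j:ℝ)/m)*J) * b (t*(1-(j:ℝ)/m)))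
        ≤ (m:ℝ) * ((m:ℝ)^2*c*Real.exp (t*ρ₂)) := by
      calc (∑ j ∈ Finset.Icc 2 m, K j * Real.exp (-t*((j:ℝ)/m)*J) * b (t*(1-(j:ℝ)/m)))
          ≤ ∑ _j ∈ Finset.Icc 2 m, (m:ℝ)^2*c*Real.exp (t*ρ₂) := Finset.sum_le_sum hsummand
        _ = ((Finset.Icc 2 m).card : ℝ) * ((m:ℝ)^2*c*Real.exp (t*ρ₂)) := by
            rw [Finset.sum_const, nsmul_eq_mul]
        _ ≤ (m:ℝ) * ((m:ℝ)^2*c*Real.exp (t*ρ₂)) := by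
            apply mul_le_mul_of_nonneg_right _ (by positivity)
            have hcard : (Finset.Icc 2 m).card ≤ m := by rw [Nat.card_Icc]; omega
            exact_mod_cast hcard
    have hterm2 : Real.exp (t*η) * ((m:ℝ)*((m:ℝ)^2*c*Real.exp (t*ρ₂)))
        ≤ (m:ℝ)^3*c*Real.exp (t*ρ) := by
      have hee : Real.exp (t*η) * Real.exp (t*ρ₂) ≤ Real.exp (t*ρ) := by
        rw [← Real.exp_add]
        apply Real.exp_le_exp.mpr
        have h := mul_le_mul_of_nonneg_left (le_max_right (-J+η) (η+ρ₂)) ht0.le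
        calc t*η + t*ρ₂ = t*(η+ρ₂) := by ring
          _ ≤ t*ρ := h
      calc Real.exp (t*η) * ((m:ℝ)*((m:ℝ)^2*c*Real.exp (t*ρ₂)))
          = (m:ℝ)^3*c * (Real.exp (t*η) * Real.exp (t*ρ₂)) := by ring
        _ ≤ (m:ℝ)^3*c * Real.exp (t*ρ) :=
            mul_le_mul_of_nonneg_left hee (by positivity)
    calc b t ≤ (2 + (m:ℝ)^2*c) * Real.exp (-t * J + t * η) +
        Real.exp (t * η) * ∑ j ∈ Finset.Icc 2 m,
          K j * Real.exp (-t * ((j:ℝ)/m) * J) * b (t * (1 - (j:ℝ)/m)) := hineq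
      _ ≤ (2 + (m:ℝ)^2*c) * Real.exp (t*ρ) + (m:ℝ)^3*c*Real.exp (t*ρ) := by
          apply add_le_add hterm1
          calc Real.exp (t*η) * ∑ j ∈ Finset.Icc 2 m,
              K j * Real.exp (-t * ((j:ℝ)/m) * J) * b (t * (1 - (j:ℝ)/m))
              ≤ Real.exp (t*η) * ((m:ℝ)*((m:ℝ)^2*c*Real.exp (t*ρ₂))) :=
                mul_le_mul_of_nonneg_left hsum (Real.exp_nonneg _)
            _ ≤ (m:ℝ)^3*c*Real.exp (t*ρ) := hterm2
      _ = C * Real.exp (t*ρ) := by rw [hCdef]; ring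
  -- conclude
  set γ := (X - ρ)/2 with hγdef
  have hγ0 : 0 < γ := by rw [hγdef]; linarith
  have hfin : ∀ᶠ t in atTop, f t ≤ ((ρ + γ : ℝ) : EReal) := by
    filter_upwards [eventually_ge_atTop
      (max (max (max t₁ 1) ((m:ℝ)*T)) (Real.log C / γ))] with t ht
    have ht2 : max (max t₁ 1) ((m:ℝ)*T) ≤ t := le_trans (le_max_left _ _) ht
    have htlog : Real.log C / γ ≤ t := le_trans (le_max_right _ _) ht
    have ht1 : (1:ℝ) ≤ t := le_trans (le_trans (le_max_right t₁ 1) (le_max_left _ _)) ht2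
    have ht0 : (0:ℝ) < t := by linarith
    have hbt := hmain t ht2
    have hb0 := (hb t ht0.le).1
    have hlog : Real.log (b t) ≤ Real.log C + t*ρ := by
      calc Real.log (b t) ≤ Real.log (C * Real.exp (t*ρ)) := by
            apply Real.log_le_log hb0 hbt
        _ = Real.log C + t*ρ := by
            rw [Real.log_mul hCpos.ne' (Real.exp_ne_zero _), Real.log_exp]
    have hlogC : Real.log C ≤ t * γ := by
      rw [div_le_iff₀ hγ0] at htlog; linarith
    have hfinal : (1/t) * Real.log (b t) ≤ ρ + γ := by
      have h2 : Real.log (b t) ≤ t * (ρ + γ) := by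
        have : t*(ρ+γ) = t*ρ + t*γ := by ring
        linarith
      calc (1/t) * Real.log (b t) ≤ (1/t) * (t*(ρ+γ)) :=
            mul_le_mul_of_nonneg_left h2 (by positivity)
        _ = ρ + γ := by field_simp
    exact EReal.coe_le_coe_iff.mpr hfinal
  have hle : Filter.limsup f atTop ≤ ((ρ + γ : ℝ) : EReal) :=
    Filter.limsup_le_of_le (by isBoundedDefault) hfin
  rw [← hX] at hle
  have hXle : X ≤ ρ + γ := EReal.coe_le_coe_iff.mp hle
  rw [hγdef] at hXle
  linarith
end
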